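/- Let k be a field and let A be a nontrivial finite-dimensional associative unital k-algebra. Then A has a nilpotent two-sided ideal I such that the quotient algebra A/I is isomorphic as a k-algebra to a finite product of simple k-algebras. -/

import Mathlib

open Module Submodule

namespace WedderburnAux

variable {k : Type} [Field k]

section Basic
variable {B : Type} [Ring B] [Algebra k B]

/-- A `k`-submodule that is a two-sided ideal. -/
def TS (S : Submodule k B) : Prop := (⊤ : Submodule k B) * S ≤ S ∧ S * ⊤ ≤ S

lemma TS.of_mem {S : Submodule k B} (h1 : ∀ x ∈ S, ∀ y : B, x * y ∈ S)
    (h2 : ∀ x ∈ S, ∀ y : B, y * x ∈ S) : TS S :=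
  ⟨mul_le.2 fun y _ x hx => h2 x hx y, mul_le.2 fun x hx y _ => h1 x hx y⟩

lemma TS.mul_right {S : Submodule k B} (h : TS S) {x : B} (hx : x ∈ S) (y : B) : x * y ∈ S :=
  h.2 (mul_mem_mul hx mem_top)

lemma TS.mul_left {S : Submodule k B} (h : TS S) {x : B} (hx : x ∈ S) (y : B) : y * x ∈ S :=
  h.1 (mul_mem_mul mem_top hx)

lemma TS.bot : TS (⊥ : Submodule k B) :=
  TS.of_mem (fun x hx y => by simp_all [Submodule.mem_bot]) (fun x hx y => by simp_all [Submodule.mem_bot])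

lemma TS.sup {S T : Submodule k B} (hS : TS S) (hT : TS T) : TS (S ⊔ T) := by
  constructor
  · rw [Submodule.mul_sup]
    exact sup_le (le_trans hS.1 le_sup_left) (le_trans hT.1 le_sup_right)
  · rw [Submodule.sup_mul]
    exact sup_le (le_trans hS.2 le_sup_left) (le_trans hT.2 le_sup_right)

lemma top_mul_top : (⊤ : Submodule k B) * ⊤ = ⊤ := by
  refine le_antisymm le_top fun x _ => ?_
  simpa using mul_mem_mul (mem_top (x := x)) (mem_top (x := (1 : B)))

lemma TS.conj (X : Submodule k B) : TS ((⊤ : Submodule k B) * X * ⊤) := by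
  constructor
  · have : (⊤ : Submodule k B) * (⊤ * X * ⊤) = ⊤ * X * ⊤ := by
      calc (⊤ : Submodule k B) * (⊤ * X * ⊤) = ⊤ * (⊤ * X) * ⊤ := by rw [← mul_assoc]
        _ = ⊤ * ⊤ * X * ⊤ := by rw [← mul_assoc]
        _ = ⊤ * X * ⊤ := by rw [top_mul_top]
    exact this.le
  · have : (⊤ : Submodule k B) * X * ⊤ * ⊤ = ⊤ * X * ⊤ := by
      calc (⊤ : Submodule k B) * X * ⊤ * ⊤ = ⊤ * X * (⊤ * ⊤) := by rw [mul_assoc]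
        _ = ⊤ * X * ⊤ := by rw [top_mul_top]
    exact this.le

lemma TS.pow {S : Submodule k B} (h : TS S) : ∀ n : ℕ, TS (S ^ (n + 1))
  | 0 => by simpa using h
  | (n + 1) => by
    have ih := TS.pow h n
    constructor
    · rw [pow_succ, ← mul_assoc]
      exact mul_le_mul' ih.1 le_rfl
    · rw [pow_succ, mul_assoc]
      exact mul_le_mul' le_rfl h.2

lemma pow_le_pow_left' {S T : Submodule k B} (h : S ≤ T) : ∀ n : ℕ, S ^ n ≤ T ^ n
  | 0 => le_rfl
  | (n + 1) => by rw [pow_succ, pow_succ]; exact mul_le_mul' (pow_le_pow_left' h n) h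

lemma pow_le_self {S : Submodule k B} (h : TS S) : ∀ n : ℕ, S ^ (n + 1) ≤ S
  | 0 => by simp
  | (n + 1) => by
    rw [pow_succ]
    exact le_trans (mul_le_mul' (pow_le_self h n) le_top) h.2

lemma list_prod_mem_pow {S : Submodule k B} :
    ∀ l : List B, (∀ x ∈ l, x ∈ S) → l.prod ∈ S ^ l.length
  | [], _ => by simpa [Submodule.one_eq_span] using Submodule.mem_span_singleton_self (1 : B)
  | (a :: l), h => by
    rw [List.prod_cons, List.length_cons, pow_succ']
    exact mul_mem_mul (h a (by simp)) (list_prod_mem_pow l fun x hx => h x (by simp [hx]))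

lemma one_mem_pow {S : Submodule k B} (h : (1 : B) ∈ S) : ∀ n : ℕ, (1 : B) ∈ S ^ (n + 1)
  | 0 => by simpa using h
  | (n + 1) => by
    rw [pow_succ]
    simpa using mul_mem_mul (one_mem_pow h n) h

/-- Elementwise semiprimeness. -/
def Semiprime (B : Type) [Ring B] : Prop := ∀ x : B, (∀ y : B, x * y * x = 0) → x = 0

lemma eq_bot_of_sq (hsp : Semiprime B) {T : Submodule k B} (hT : TS T)
    (h : ∀ a ∈ T, ∀ b ∈ T, a * b = 0) : T = ⊥ := by
  rw [eq_bot_iff]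
  intro x hx
  rw [Submodule.mem_bot]
  exact hsp x fun y => h _ (hT.mul_right hx y) _ hx

lemma eq_bot_of_pow (hsp : Semiprime B) {S : Submodule k B} (hS : TS S) :
    ∀ n : ℕ, S ^ (n + 1) = ⊥ → S = ⊥ := by
  intro n
  induction n using Nat.strong_induction_on with
  | _ n ih =>
    intro h
    rcases n with _ | n
    · simpa using h
    · have hm : S ^ (n + 1) = ⊥ := by
        apply eq_bot_of_sq hsp (hS.pow _)
        intro a ha b hb
        have hmem : a * b ∈ S ^ (n + 1) * S ^ (n + 1) := mul_mem_mul ha hb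
        rw [← pow_add] at hmem
        have hle : S ^ (n + 1 + (n + 1)) ≤ ⊥ := by
          have h2 : n + 1 + (n + 1) = (n + 2) + n := by omega
          rw [h2, pow_add, h, bot_mul]
        simpa using hle hmem
      exact ih n (by omega) hm

lemma nil_of_sq_le {S W : Submodule k B} {n : ℕ} (hW : W * W ≤ S) (hSn : S ^ (n + 1) = ⊥) :
    W ^ (2 * n + 1 + 1) = ⊥ := by
  have h1 : W ^ (2 * n + 1 + 1) = (W * W) ^ (n + 1) := by
    rw [← pow_two, ← pow_mul]
    ring_nf
  rw [h1]
  exact le_bot_iff.mp (hSn ▸ pow_le_pow_left' hW (n + 1))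

lemma quotient_pack (I : TwoSidedIdeal B) :
    ∃ (Q : Type) (_ : Ring Q) (_ : Algebra k Q) (π : B →ₐ[k] Q),
      Function.Surjective π ∧ ∀ x : B, π x = 0 ↔ x ∈ I := by
  letI Q := I.ringCon.Quotient
  letI : Algebra k Q := RingHom.toAlgebra' (I.ringCon.mk'.comp (algebraMap k B)) (by
    intro c x
    obtain ⟨x, rfl⟩ := Quotient.mk''_surjective x
    show I.ringCon.mk' _ * I.ringCon.mk' x = I.ringCon.mk' x * I.ringCon.mk' _
    rw [← map_mul, ← map_mul, Algebra.commutes])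
  refine ⟨Q, inferInstance, inferInstance,
    { toRingHom := I.ringCon.mk', commutes' := fun c => rfl }, ?_, fun x => ?_⟩
  · exact fun q => Quotient.mk''_surjective q
  · have h1 : x ∈ TwoSidedIdeal.ker I.ringCon.mk' ↔ I.ringCon.mk' x = 0 :=
      TwoSidedIdeal.mem_ker _
    rw [TwoSidedIdeal.ker_ringCon_mk'] at h1
    exact h1.symm

lemma semisimple_of_jacobson_bot [Nontrivial B] [FiniteDimensional k B]
    (hJ : Ideal.jacobson (⊥ : Ideal B) = ⊥) : IsSemisimpleRing B := by
  classical
  obtain ⟨M₀, hM₀⟩ := Ideal.exists_maximal B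
  have hP : ∃ m : ℕ, ∃ s : Finset (Ideal B), (∀ M ∈ s, M.IsMaximal) ∧
      finrank k ((s.inf id).restrictScalars k) = m :=
    ⟨_, {M₀}, by simpa using hM₀, rfl⟩
  obtain ⟨s, hs, hfr⟩ := Nat.find_spec hP
  have hbot : s.inf id = ⊥ := by
    have hle : ∀ M : Ideal B, M.IsMaximal → s.inf id ≤ M := by
      intro M hM
      by_contra hnle
      have hlt : (((insert M s).inf id).restrictScalars k) < ((s.inf id).restrictScalars k) := by
        rw [Finset.inf_insert]
        constructor
        · intro x hx
          exact hx.2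
        · intro hcon
          apply hnle
          intro x hx
          have : x ∈ (id M ⊓ s.inf id).restrictScalars k := hcon hx
          exact this.1
      have hmin := Nat.find_min' hP
        ⟨insert M s, fun M' hM' => by
          rcases Finset.mem_insert.mp hM' with h | h
          · exact h ▸ hM
          · exact hs M' h, rfl⟩
      have hlt2 := Submodule.finrank_lt_finrank_of_lt hlt
      omega
    have : s.inf id ≤ Ideal.jacobson (⊥ : Ideal B) :=
      le_sInf fun M hM => hle M hM.2
    exact le_bot_iff.mp (hJ ▸ this)
  haveI hsm : ∀ M : s, IsSimpleModule B (B ⧸ (M : Ideal B)) := fun M =>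
    isSimpleModule_iff_isCoatom.mpr (hs M M.2).out
  set g : B →ₗ[B] ∀ M : s, B ⧸ (M : Ideal B) := LinearMap.pi fun M => (M : Ideal B).mkQ with hg
  have hginj : Function.Injective g := by
    rw [← LinearMap.ker_eq_bot, hg, LinearMap.ker_pi]
    simp only [Submodule.ker_mkQ]
    rw [← le_bot_iff, ← hbot]
    exact Finset.le_inf fun M hM => iInf_le (fun M : s => (M : Ideal B)) ⟨M, hM⟩
  haveI hpi : IsSemisimpleModule B (∀ M : s, B ⧸ (M : Ideal B)) := by
    apply isSemisimpleModule_of_isSemisimpleModule_submodule'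
      (p := fun M : s => LinearMap.range (LinearMap.single B (fun M : s => B ⧸ (M : Ideal B)) M))
    · intro M
      have := hsm M
      exact IsSemisimpleModule.range _
    · refine top_le_iff.mp fun x _ => ?_
      rw [← Finset.univ_sum_single x]
      exact Submodule.sum_mem _ fun M _ => Submodule.mem_iSup_of_mem M ⟨x M, rfl⟩
  exact IsSemisimpleModule.congr (M := LinearMap.range g) (LinearEquiv.ofInjective g hginj)

end Basic

theorem jacobson_bot_of_semiprime {B : Type} [Ring B] [Algebra k B] [FiniteDimensional k B]
    (hsp : Semiprime B) : Ideal.jacobson (⊥ : Ideal B) = ⊥ := by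
  classical
  set N : Submodule k B := (Ideal.jacobson (⊥ : Ideal B)).restrictScalars k with hN
  have hNTS : TS N := by
    apply TS.of_mem
    · intro x hx y
      exact (Ideal.jacobson (⊥ : Ideal B)).mul_mem_right y hx
    · intro x hx y
      exact (Ideal.jacobson (⊥ : Ideal B)).smul_mem y hx
  have hNbot : N = ⊥ := by
    by_contra hN0
    -- stabilized power
    have hex : ∃ m : ℕ, ∃ i : ℕ, finrank k (N ^ (i + 1) : Submodule k B) = m := ⟨_, 0, rfl⟩
    obtain ⟨i₀, hi₀eq⟩ := Nat.find_spec hex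
    have hi₀ : ∀ j : ℕ, finrank k (N ^ (i₀ + 1) : Submodule k B) ≤
        finrank k (N ^ (j + 1) : Submodule k B) := fun j =>
      hi₀eq ▸ Nat.find_min' hex ⟨j, rfl⟩
    set M := N ^ (i₀ + 1) with hM
    have hchain : ∀ j, N ^ (i₀ + 1 + j) = M := by
      intro j
      induction j with
      | zero => rfl
      | succ j hj =>
        have hle1 : N ^ (i₀ + 1 + (j + 1)) ≤ M := by
          have : N ^ (i₀ + 1 + (j + 1)) = N ^ (i₀ + 1 + j) * N := by
            rw [show i₀ + 1 + (j + 1) = (i₀ + 1 + j) + 1 by omega, pow_succ]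
          rw [this, hj]
          exact le_trans (mul_le_mul' le_rfl le_top) (hNTS.pow i₀).2
        refine Submodule.eq_of_le_of_finrank_le hle1 ?_
        have h2 := hi₀ (i₀ + 1 + j)
        have h3 : i₀ + 1 + j + 1 = i₀ + 1 + (j + 1) := by omega
        rw [h3] at h2
        exact h2
    have hMM : M * M = M := by
      have : M * M = N ^ (i₀ + 1 + (i₀ + 1)) := by rw [hM, ← pow_add]
      rw [this, hchain]
    have hMne : M ≠ ⊥ := fun h => hN0 (eq_bot_of_pow hsp hNTS i₀ h)
    have hMTS : TS M := hNTS.pow i₀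
    have hMN : M ≤ N := pow_le_self hNTS i₀
    -- minimal left ideal L with M * L ≠ ⊥
    have hexL : ∃ m : ℕ, ∃ L : Submodule k B,
        ((⊤ : Submodule k B) * L ≤ L) ∧ M * L ≠ ⊥ ∧ finrank k L = m := by
      refine ⟨_, ⊤, le_top, fun h => hMne ?_, rfl⟩
      rw [← le_bot_iff, ← h]
      intro x hx
      simpa using mul_mem_mul hx (mem_top (x := (1 : B)))
    obtain ⟨L, hLl, hML, hLfr⟩ := Nat.find_spec hexL
    have hLmin : ∀ L' : Submodule k B, ((⊤ : Submodule k B) * L' ≤ L') → M * L' ≠ ⊥ →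
        finrank k L ≤ finrank k L' := fun L' h1 h2 =>
      hLfr ▸ Nat.find_min' hexL ⟨L', h1, h2, rfl⟩
    obtain ⟨a, haL, haM⟩ : ∃ a ∈ L, M * (span k {a}) ≠ ⊥ := by
      by_contra h
      push_neg at h
      refine hML (le_bot_iff.mp (mul_le.2 fun m hm x hx => ?_))
      have h2 : m * x ∈ M * span k {x} := mul_mem_mul hm (mem_span_singleton_self x)
      rw [h x hx] at h2
      exact h2
    set Q := M * span k {a} with hQdef
    have hQL : Q ≤ L := mul_le.2 fun m hm z hz => by
      obtain ⟨c, rfl⟩ := mem_span_singleton.mp hz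
      rw [mul_smul_comm]
      exact Submodule.smul_mem _ c (hLl (mul_mem_mul mem_top haL))
    have hQl : (⊤ : Submodule k B) * Q ≤ Q := by
      rw [hQdef, ← mul_assoc]
      exact mul_le_mul' hMTS.1 le_rfl
    have hMQ : M * Q ≠ ⊥ := by
      rw [hQdef, ← mul_assoc, hMM]
      exact haM
    have hQeq : Q = L := Submodule.eq_of_le_of_finrank_le hQL (hLmin Q hQl hMQ)
    have haQ : a ∈ Q := hQeq ▸ haL
    obtain ⟨x, hxM, hxa⟩ : ∃ x ∈ M, x * a = a := by
      have hmap : Q ≤ Submodule.map (LinearMap.mulRight k a) M := by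
        rw [hQdef]
        refine mul_le.2 fun m hm z hz => ?_
        obtain ⟨c, rfl⟩ := mem_span_singleton.mp hz
        exact ⟨c • m, Submodule.smul_mem _ c hm, by
          rw [LinearMap.mulRight_apply, smul_mul_assoc, mul_smul_comm]⟩
      obtain ⟨x, hx, hxa⟩ := hmap haQ
      exact ⟨x, hx, hxa⟩
    have hxJ : x ∈ Ideal.jacobson (⊥ : Ideal B) := hMN hxM
    obtain ⟨z, hz⟩ := Ideal.mem_jacobson_iff.mp hxJ (-1)
    rw [Ideal.mem_bot] at hz
    have hz2 : z - z * x - 1 = 0 := by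
      rw [← hz]
      rw [mul_neg_one, neg_mul]
      abel
    have hz3 : z - z * x = 1 := by
      have := sub_eq_zero.mp hz2
      exact this
    have ha0 : a = 0 := by
      have hcalc : (z - z * x) * a = z * a - z * (x * a) := by rw [sub_mul, mul_assoc]
      rw [hz3, one_mul, hxa, sub_self] at hcalc
      exact hcalc
    refine haM ?_
    rw [hQdef, ha0, span_zero_singleton, Submodule.mul_bot]
  rw [← le_bot_iff]
  intro x hx
  have : x ∈ N := hx
  rw [hNbot] at this
  exact this

theorem main (d : ℕ) :
    ∀ (B : Type) [Ring B] [Algebra k B], FiniteDimensional k B → Nontrivial B →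
      Semiprime B → finrank k B ≤ d →
      ∃ (ι : Type) (_ : Fintype ι) (C : ι → Type) (_ : ∀ i, Ring (C i))
        (_ : ∀ i, Algebra k (C i)),
        (∀ i, IsSimpleRing (C i)) ∧ ∃ g : B →ₐ[k] ((i : ι) → C i), Function.Bijective g := by
  induction d with
  | zero =>
    intro B _ _ hFD hNT hsp hle
    exact absurd (Module.finrank_pos (R := k) (M := B)) (by omega)
  | succ d ih =>
    intro B _ _ hFD hNT hsp hle
    classical
    haveI : IsSemisimpleRing B := semisimple_of_jacobson_bot (k := k) (jacobson_bot_of_semiprime (k := k) hsp)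
    by_cases hsimp : IsSimpleRing B
    · refine ⟨Unit, inferInstance, fun _ => B, fun _ => inferInstance, fun _ => inferInstance,
        fun _ => hsimp, Pi.algHom k _ (fun _ => AlgHom.id k B), ?_, ?_⟩
      · intro x y h
        simpa using congrFun h Unit.unit
      · intro t
        exact ⟨t Unit.unit, funext fun u => rfl⟩
    · -- B is not simple: split off a central idempotent
      have hnso : ¬ IsSimpleOrder (TwoSidedIdeal B) := fun h => hsimp ⟨h⟩
      haveI : Nontrivial (TwoSidedIdeal B) := ⟨⊥, ⊤, fun h => by
        have h1 : (1 : B) ∈ (⊥ : TwoSidedIdeal B) := by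
          rw [h]; exact TwoSidedIdeal.mem_top B
        rw [TwoSidedIdeal.mem_bot] at h1
        exact one_ne_zero h1⟩
      obtain ⟨I₂, hI₂b, hI₂t⟩ : ∃ I₂ : TwoSidedIdeal B, I₂ ≠ ⊥ ∧ I₂ ≠ ⊤ := by
        by_contra h
        push_neg at h
        exact hnso ⟨fun I => or_iff_not_imp_left.mpr (h I)⟩
      obtain ⟨e, he, hTe⟩ := IsSemisimpleRing.ideal_eq_span_idempotent (TwoSidedIdeal.asIdeal I₂)
      have hmemT : ∀ x : B, x ∈ TwoSidedIdeal.asIdeal I₂ ↔ x ∈ I₂ := fun x =>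
        TwoSidedIdeal.mem_asIdeal
      have heT : e ∈ TwoSidedIdeal.asIdeal I₂ := hTe ▸ Ideal.subset_span rfl
      have he0 : e ≠ 0 := by
        rintro rfl
        apply hI₂b
        rw [eq_bot_iff]
        intro x hx
        rw [TwoSidedIdeal.mem_bot]
        have hx2 : x ∈ TwoSidedIdeal.asIdeal I₂ := (hmemT x).mpr hx
        rw [hTe] at hx2
        obtain ⟨b, hb⟩ := Submodule.mem_span_singleton.mp hx2
        rw [← hb, smul_zero]
      have he1 : e ≠ 1 := by
        rintro rfl
        exact hI₂t ((TwoSidedIdeal.one_mem_iff I₂).mp ((hmemT 1).mp heT))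
      have hTr : ∀ x ∈ TwoSidedIdeal.asIdeal I₂, ∀ y : B, x * y ∈ TwoSidedIdeal.asIdeal I₂ :=
        fun x hx y => (hmemT _).mpr (I₂.mul_mem_right _ _ ((hmemT _).mp hx))
      have hre : ∀ t ∈ TwoSidedIdeal.asIdeal I₂, t * e = t := by
        intro t ht
        rw [hTe] at ht
        obtain ⟨b, hb⟩ := Submodule.mem_span_singleton.mp ht
        rw [← hb, smul_eq_mul, mul_assoc, he]
      have hex2 : ∀ y : B, e * y * e = e * y := fun y => hre _ (hTr e heT y)
      have hcent : ∀ y : B, y * e = e * y := by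
        intro y
        have hyeT : y * e ∈ TwoSidedIdeal.asIdeal I₂ := by
          rw [hTe]
          exact Submodule.mem_span_singleton.mpr ⟨y, by rw [smul_eq_mul]⟩
        have heyeT : e * (y * e) ∈ TwoSidedIdeal.asIdeal I₂ := by
          rw [hTe]
          exact Submodule.mem_span_singleton.mpr ⟨e * y, by rw [smul_eq_mul, mul_assoc]⟩
        have hkey : ∀ w : B, (y * e - e * (y * e)) * w * (y * e - e * (y * e)) = 0 := by
          intro w
          have h0 : e * w * (1 - e) = 0 := by
            rw [mul_sub, mul_one, hex2, sub_self]
          have hfac : y * e - e * (y * e) = (1 - e) * (y * e) := by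
            rw [sub_mul, one_mul]
          calc (y * e - e * (y * e)) * w * (y * e - e * (y * e))
              = ((1 - e) * (y * e)) * w * ((1 - e) * (y * e)) := by rw [hfac]
            _ = ((1 - e) * y) * (e * w * (1 - e)) * (y * e) := by noncomm_ring
            _ = 0 := by rw [h0, mul_zero, zero_mul]
        have hv0 : y * e - e * (y * e) = 0 := hsp _ hkey
        have hv1 : y * e = e * (y * e) := by rwa [sub_eq_zero] at hv0
        rw [hv1, ← mul_assoc, hex2]
      have hf : IsIdempotentElem (1 - e) := he.one_sub
      have h1cent : ∀ y : B, y * (1 - e) = (1 - e) * y := fun y => by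
        rw [mul_sub, sub_mul, mul_one, one_mul, hcent]
      -- kernel two-sided ideals for central elements
      have mkK : ∀ c : B, (∀ y, y * c = c * y) →
          ∃ K : TwoSidedIdeal B, ∀ x : B, x ∈ K ↔ x * c = x := by
        intro c hc
        refine ⟨TwoSidedIdeal.mk' {x : B | x * c = x} (by simp)
          (fun {x y} hx hy => by
            simp only [Set.mem_setOf_eq] at *
            rw [add_mul, hx, hy])
          (fun {x} hx => by
            simp only [Set.mem_setOf_eq] at *
            rw [neg_mul, hx])
          (fun {x y} hy => by
            simp only [Set.mem_setOf_eq] at *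
            rw [mul_assoc, hy])
          (fun {x y} hx => by
            simp only [Set.mem_setOf_eq] at *
            rw [mul_assoc, hc y, ← mul_assoc, hx]), fun x => ?_⟩
        rw [TwoSidedIdeal.mem_mk']
        rfl
      obtain ⟨K₁, hK₁⟩ := mkK (1 - e) h1cent
      obtain ⟨K₂, hK₂⟩ := mkK e hcent
      obtain ⟨Q₁, _, _, π₁, hπ₁s, hπ₁k⟩ := quotient_pack (k := k) K₁
      obtain ⟨Q₂, _, _, π₂, hπ₂s, hπ₂k⟩ := quotient_pack (k := k) K₂
      have hk₁ : ∀ x : B, π₁ x = 0 ↔ x * (1 - e) = x := fun x => (hπ₁k x).trans (hK₁ x)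
      have hk₂ : ∀ x : B, π₂ x = 0 ↔ x * e = x := fun x => (hπ₂k x).trans (hK₂ x)
      letI : FiniteDimensional k Q₁ := Module.Finite.of_surjective π₁.toLinearMap hπ₁s
      letI : FiniteDimensional k Q₂ := Module.Finite.of_surjective π₂.toLinearMap hπ₂s
      haveI hNT₁ : Nontrivial Q₁ := ⟨1, 0, fun h => by
        have h2 : π₁ 1 = 0 := by rw [map_one]; exact h
        have h3 := (hk₁ 1).mp h2
        rw [one_mul] at h3
        exact he0 (sub_eq_self.mp h3)⟩
      haveI hNT₂ : Nontrivial Q₂ := ⟨1, 0, fun h => by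
        have h2 : π₂ 1 = 0 := by rw [map_one]; exact h
        have h3 := (hk₂ 1).mp h2
        rw [one_mul] at h3
        exact he1 h3⟩
      have hspQ₁ : Semiprime Q₁ := by
        intro ξ hξ
        obtain ⟨b, rfl⟩ := hπ₁s ξ
        have hb : ∀ y : B, (b * e) * y * (b * e) = 0 := by
          intro y
          have h1 : π₁ (b * (e * y) * b) = 0 := by
            have h2 := hξ (π₁ (e * y))
            rw [← map_mul, ← map_mul] at h2
            exact h2
          have h2 : (b * (e * y) * b) * (1 - e) = b * (e * y) * b := (hk₁ _).mp h1
          have h3 : (b * (e * y) * b) * e = 0 := by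
            rw [mul_sub, mul_one] at h2
            exact sub_eq_self.mp h2
          calc (b * e) * y * (b * e) = (b * (e * y) * b) * e := by noncomm_ring
            _ = 0 := h3
        have hbe : b * e = 0 := hsp _ hb
        apply (hk₁ b).mpr
        rw [mul_sub, mul_one, hbe, sub_zero]
      have hspQ₂ : Semiprime Q₂ := by
        intro ξ hξ
        obtain ⟨b, rfl⟩ := hπ₂s ξ
        have hb : ∀ y : B, (b * (1 - e)) * y * (b * (1 - e)) = 0 := by
          intro y
          have h1 : π₂ (b * ((1 - e) * y) * b) = 0 := by
            have h2 := hξ (π₂ ((1 - e) * y))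
            rw [← map_mul, ← map_mul] at h2
            exact h2
          have h2 : (b * ((1 - e) * y) * b) * e = b * ((1 - e) * y) * b := (hk₂ _).mp h1
          have h3 : (b * ((1 - e) * y) * b) * (1 - e) = 0 := by
            rw [mul_sub, mul_one, h2, sub_self]
          calc (b * (1 - e)) * y * (b * (1 - e)) = (b * ((1 - e) * y) * b) * (1 - e) := by
                noncomm_ring
            _ = 0 := h3
        have hbe : b * (1 - e) = 0 := hsp _ hb
        apply (hk₂ b).mpr
        rw [mul_sub, mul_one] at hbe
        exact (sub_eq_zero.mp hbe).symm
      -- dimension bounds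
      have hfr₁ : finrank k Q₁ < finrank k B := by
        have hrn := LinearMap.finrank_range_add_finrank_ker π₁.toLinearMap
        have hr : LinearMap.range π₁.toLinearMap = ⊤ :=
          LinearMap.range_eq_top.mpr (fun q => hπ₁s q)
        rw [hr, finrank_top] at hrn
        have hker : (1 : B) - e ∈ LinearMap.ker π₁.toLinearMap := by
          rw [LinearMap.mem_ker]
          exact (hk₁ _).mpr hf
        haveI : Nontrivial (LinearMap.ker π₁.toLinearMap) := by
          apply Submodule.nontrivial_iff_ne_bot.mpr
          intro hcon
          rw [hcon, Submodule.mem_bot] at hker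
          exact he1 (sub_eq_zero.mp hker).symm
        have hpos := Module.finrank_pos (R := k) (M := LinearMap.ker π₁.toLinearMap)
        omega
      have hfr₂ : finrank k Q₂ < finrank k B := by
        have hrn := LinearMap.finrank_range_add_finrank_ker π₂.toLinearMap
        have hr : LinearMap.range π₂.toLinearMap = ⊤ :=
          LinearMap.range_eq_top.mpr (fun q => hπ₂s q)
        rw [hr, finrank_top] at hrn
        have hker : e ∈ LinearMap.ker π₂.toLinearMap := by
          rw [LinearMap.mem_ker]
          exact (hk₂ _).mpr he
        haveI : Nontrivial (LinearMap.ker π₂.toLinearMap) := by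
          apply Submodule.nontrivial_iff_ne_bot.mpr
          intro hcon
          rw [hcon, Submodule.mem_bot] at hker
          exact he0 hker
        have hpos := Module.finrank_pos (R := k) (M := LinearMap.ker π₂.toLinearMap)
        omega
      -- pairing
      have hpair_inj : ∀ b : B, π₁ b = 0 → π₂ b = 0 → b = 0 := by
        intro b h1 h2
        have hb1 : b * (1 - e) = b := (hk₁ b).mp h1
        have hb2 : b * e = b := (hk₂ b).mp h2
        have h3 : (1 - e) * e = 0 := by rw [sub_mul, one_mul, he, sub_self]
        calc b = b * e := hb2.symm
          _ = (b * (1 - e)) * e := by rw [hb1]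
          _ = 0 := by rw [mul_assoc, h3, mul_zero]
      have hpair_surj : ∀ (q₁ : Q₁) (q₂ : Q₂), ∃ b : B, π₁ b = q₁ ∧ π₂ b = q₂ := by
        intro q₁ q₂
        obtain ⟨y, rfl⟩ := hπ₁s q₁
        obtain ⟨z, rfl⟩ := hπ₂s q₂
        refine ⟨y * e + z * (1 - e), ?_, ?_⟩
        · have hmem : π₁ (y * e + z * (1 - e) - y) = 0 := by
            apply (hk₁ _).mpr
            have hw : y * e + z * (1 - e) - y = (z - y) * (1 - e) := by noncomm_ring
            rw [hw, mul_assoc, hf]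
          rw [map_sub] at hmem
          exact sub_eq_zero.mp hmem
        · have hmem : π₂ (y * e + z * (1 - e) - z) = 0 := by
            apply (hk₂ _).mpr
            have hw : y * e + z * (1 - e) - z = (y - z) * e := by noncomm_ring
            rw [hw, mul_assoc, he]
          rw [map_sub] at hmem
          exact sub_eq_zero.mp hmem
      -- recurse
      obtain ⟨ι₁, hft₁, C₁, rC₁, aC₁, hsimp₁, g₁, hg₁⟩ :=
        ih Q₁ inferInstance hNT₁ hspQ₁ (by omega)
      obtain ⟨ι₂, hft₂, C₂, rC₂, aC₂, hsimp₂, g₂, hg₂⟩ :=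
        ih Q₂ inferInstance hNT₂ hspQ₂ (by omega)
      letI := hft₁
      letI := hft₂
      -- assemble over the sum type
      letI instR : ∀ s : ι₁ ⊕ ι₂, Ring (Sum.elim C₁ C₂ s) :=
        fun s => Sum.rec (motive := fun s => Ring (Sum.elim C₁ C₂ s)) rC₁ rC₂ s
      letI instA : ∀ s : ι₁ ⊕ ι₂, Algebra k (Sum.elim C₁ C₂ s) :=
        fun s => Sum.rec (motive := fun s => Algebra k (Sum.elim C₁ C₂ s)) aC₁ aC₂ s
      refine ⟨ι₁ ⊕ ι₂, inferInstance, Sum.elim C₁ C₂, instR, instA,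
        (fun i => Sum.rec (motive := fun s => IsSimpleRing (Sum.elim C₁ C₂ s)) hsimp₁ hsimp₂ i),
        Pi.algHom k _ (fun i => Sum.rec
          (motive := fun s => B →ₐ[k] Sum.elim C₁ C₂ s)
          (fun j => (Pi.evalAlgHom k C₁ j).comp (g₁.comp π₁))
          (fun j => (Pi.evalAlgHom k C₂ j).comp (g₂.comp π₂)) i), ?_, ?_⟩
      · intro b b' hbb
        have h1 : π₁ b = π₁ b' := hg₁.1 (funext fun j => congrFun hbb (Sum.inl j))
        have h2 : π₂ b = π₂ b' := hg₂.1 (funext fun j => congrFun hbb (Sum.inr j))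
        have h3 : b - b' = 0 := hpair_inj _ (by rw [map_sub, h1, sub_self])
          (by rw [map_sub, h2, sub_self])
        exact sub_eq_zero.mp h3
      · intro t
        obtain ⟨q₁, hq₁⟩ := hg₁.2 (fun j => t (Sum.inl j))
        obtain ⟨q₂, hq₂⟩ := hg₂.2 (fun j => t (Sum.inr j))
        obtain ⟨b, hb₁, hb₂⟩ := hpair_surj q₁ q₂
        refine ⟨b, funext fun s => ?_⟩
        cases s with
        | inl j =>
          show g₁ (π₁ b) j = _
          rw [hb₁, hq₁]
        | inr j =>
          show g₂ (π₂ b) j = _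
          rw [hb₂, hq₂]


end WedderburnAux

open Module Submodule WedderburnAux

/-- Every nontrivial finite-dimensional algebra `A` over a field `k` has a nilpotent
two-sided ideal `I` such that `A / I` is isomorphic to a finite product of simple
`k`-algebras (the quotient being realized by a surjective algebra map with kernel `I`). -/
theorem exists_nilpotent_ideal_quotient_product_of_simple
    {k : Type} [Field k] {A : Type} [Ring A] [Algebra k A] [FiniteDimensional k A]
    [Nontrivial A] :
    ∃ I : TwoSidedIdeal A,
      (∃ n : ℕ, ∀ l : List A, l.length = n → (∀ x ∈ l, x ∈ I) → l.prod = 0) ∧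
      ∃ (m : ℕ) (B : Fin m → Type) (_ : ∀ i, Ring (B i)) (_ : ∀ i, Algebra k (B i)),
        (∀ i, IsSimpleRing (B i)) ∧
        ∃ f : A →ₐ[k] ((i : Fin m) → B i),
          Function.Surjective f ∧ ∀ x : A, f x = 0 ↔ x ∈ I := by
  classical
  -- pick a nilpotent two-sided k-submodule of maximal dimension
  set P : ℕ → Prop := fun m => ∃ S : Submodule k A, TS S ∧ (∃ n : ℕ, S ^ (n + 1) = ⊥) ∧
    finrank k S = m with hPdef
  have hP0 : P 0 := ⟨⊥, TS.bot, ⟨0, by simp⟩, by simp⟩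
  have hPd : P (Nat.findGreatest P (finrank k A)) :=
    Nat.findGreatest_spec (Nat.zero_le _) hP0
  obtain ⟨S, hSTS, ⟨n, hSn⟩, hSfr⟩ := hPd
  have hmax : ∀ T : Submodule k A, TS T → (∃ n' : ℕ, T ^ (n' + 1) = ⊥) → S ≤ T → T = S := by
    intro T hTTS hTn hST
    have h1 : finrank k T ≤ finrank k A := Submodule.finrank_le T
    have h2 : finrank k T ≤ Nat.findGreatest P (finrank k A) :=
      Nat.le_findGreatest h1 ⟨T, hTTS, hTn, rfl⟩
    exact (Submodule.eq_of_le_of_finrank_le hST (hSfr ▸ h2)).symm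
  have h1S : (1 : A) ∉ S := by
    intro h1
    have h2 := one_mem_pow (k := k) h1 n
    rw [hSn] at h2
    exact one_ne_zero ((Submodule.mem_bot k).mp h2)
  set Itw : TwoSidedIdeal A := TwoSidedIdeal.mk' S S.zero_mem
    (fun {x y} hx hy => S.add_mem hx hy) (fun {x} hx => S.neg_mem hx)
    (fun {x y} hy => hSTS.mul_left hy x) (fun {x y} hx => hSTS.mul_right hx y) with hItw
  have hmemI : ∀ x : A, x ∈ Itw ↔ x ∈ S := fun x => TwoSidedIdeal.mem_mk' _ _ _ _ _ _ x
  obtain ⟨Q, _, _, π, hπs, hπk⟩ := quotient_pack (k := k) Itw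
  letI : FiniteDimensional k Q := Module.Finite.of_surjective π.toLinearMap hπs
  haveI hNTQ : Nontrivial Q := ⟨1, 0, fun h =>
    h1S ((hmemI 1).mp ((hπk 1).mp (by rw [map_one]; exact h)))⟩
  -- the quotient is semiprime
  have hspQ : Semiprime Q := by
    intro ξ hξ
    obtain ⟨a, rfl⟩ := hπs ξ
    have haS : ∀ y : A, a * y * a ∈ S := by
      intro y
      have h1 := hξ (π y)
      rw [← map_mul, ← map_mul] at h1
      exact (hmemI _).mp ((hπk _).mp h1)
    set X : Submodule k A := span k {a} with hX
    have hXX : X * ⊤ * X ≤ S := by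
      refine mul_le.2 fun p hp z hz => ?_
      obtain ⟨c, rfl⟩ := mem_span_singleton.mp hz
      refine Submodule.mul_induction_on hp ?_ ?_
      · intro x1 hx1 y _
        obtain ⟨c1, rfl⟩ := mem_span_singleton.mp hx1
        have hcalc : c1 • a * y * (c • a) = c1 • (c • (a * y * a)) := by
          rw [smul_mul_assoc, smul_mul_assoc, mul_smul_comm]
        rw [hcalc]
        exact Submodule.smul_mem _ _ (Submodule.smul_mem _ _ (haS y))
      · intro m1 m2 h1 h2
        rw [add_mul]
        exact S.add_mem h1 h2
    set W : Submodule k A := S ⊔ ⊤ * X * ⊤ with hW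
    have hWTS : TS W := hSTS.sup (TS.conj X)
    have hWW : W * W ≤ S := by
      have hSS : S * S ≤ S := le_trans (mul_le_mul' le_rfl le_top) hSTS.2
      have hST' : S * (⊤ * X * ⊤) ≤ S := le_trans (mul_le_mul' le_rfl le_top) hSTS.2
      have hT'S : (⊤ * X * ⊤) * S ≤ S := le_trans (mul_le_mul' le_top le_rfl) hSTS.1
      have htt : (⊤ * X * ⊤) * (⊤ * X * ⊤) ≤ S := by
        have h2 : (⊤ : Submodule k A) * (⊤ * (X * ⊤)) = ⊤ * (X * ⊤) := by
          rw [← mul_assoc, top_mul_top]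
        calc (⊤ * X * ⊤) * (⊤ * X * ⊤) = ⊤ * (X * (⊤ * (⊤ * (X * ⊤)))) := by
              simp only [mul_assoc]
          _ = ⊤ * (X * (⊤ * (X * ⊤))) := by rw [h2]
          _ = ⊤ * ((X * ⊤ * X) * ⊤) := by simp only [mul_assoc]
          _ ≤ ⊤ * (S * ⊤) := mul_le_mul' le_rfl (mul_le_mul' hXX le_rfl)
          _ ≤ ⊤ * S := mul_le_mul' le_rfl hSTS.2
          _ ≤ S := hSTS.1
      rw [hW, Submodule.sup_mul, Submodule.mul_sup, Submodule.mul_sup]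
      exact sup_le (sup_le hSS hST') (sup_le hT'S htt)
    have hWnil : ∃ n' : ℕ, W ^ (n' + 1) = ⊥ := ⟨2 * n + 1, nil_of_sq_le hWW hSn⟩
    have hWeq : W = S := hmax W hWTS hWnil le_sup_left
    have haW : a ∈ W := by
      rw [hW]
      apply le_sup_right (a := S)
      have h1 : (1 : A) * a * 1 ∈ ⊤ * X * ⊤ :=
        mul_mem_mul (mul_mem_mul mem_top (mem_span_singleton_self a)) mem_top
      simpa using h1
    exact (hπk a).mpr ((hmemI a).mpr (hWeq ▸ haW))
  obtain ⟨ι, hft, C, rC, aC, hCs, g, hg⟩ :=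
    main (k := k) (finrank k Q) Q inferInstance hNTQ hspQ le_rfl
  letI := hft
  refine ⟨Itw, ⟨n + 1, fun l hl hmem => ?_⟩, Fintype.card ι,
    fun j => C ((Fintype.equivFin ι).symm j), fun j => rC _, fun j => aC _, fun j => hCs _,
    Pi.algHom k _ (fun j => (Pi.evalAlgHom k C ((Fintype.equivFin ι).symm j)).comp (g.comp π)),
    ?_, ?_⟩
  · have h1 := list_prod_mem_pow (k := k) l (fun x hx => (hmemI x).mp (hmem x hx))
    rw [hl, hSn] at h1
    exact (Submodule.mem_bot k).mp h1
  · intro t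
    obtain ⟨q, hq⟩ := hg.2 ((Equiv.piCongrLeft C (Fintype.equivFin ι).symm) t)
    obtain ⟨b, hb⟩ := hπs q
    refine ⟨b, funext fun j => ?_⟩
    show g (π b) ((Fintype.equivFin ι).symm j) = t j
    rw [hb, hq]
    exact Equiv.piCongrLeft_apply_apply C (Fintype.equivFin ι).symm t j
  · intro x
    constructor
    · intro hx
      have h0 : ∀ j, g (π x) ((Fintype.equivFin ι).symm j) = 0 := fun j => congrFun hx j
      have h1 : g (π x) = 0 := funext fun i => by
        have h2 := h0 ((Fintype.equivFin ι) i)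
        rwa [Equiv.symm_apply_apply] at h2
      have h2 : π x = 0 := hg.1 (by rw [h1, map_zero])
      exact (hπk x).mp h2
    · intro hx
      have h2 : π x = 0 := (hπk x).mpr hx
      funext j
      show g (π x) ((Fintype.equivFin ι).symm j) = 0
      rw [h2, map_zero]
      rfl
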